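/- At any round t of the in-processing algorithm, the fairness violation vector r̂_t(h) ∈ ℝ^{4(|𝒜|−1)}, whose coordinates are the signed differences of group-conditional empirical false/true positive rates of a fixed classifier h between each group a ≠ 0 and group 0 (minus γ), has ℓ1-sensitivity with respect to changing a single individual's protected attribute at most 2|𝒜| / (min_{a,y} q̂_{a,y} · m − 1). -/

import Mathlib

open Finset

/-- Empirical false positive rate of the predictions `pred` on group `a`:
the fraction of individuals with `A = a`, `Y = 0` that are predicted `1`. -/
noncomputable def FPrate {m : ℕ} {𝒜 : Type*} [Fintype 𝒜] [DecidableEq 𝒜]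
    (A : Fin m → 𝒜) (Ys pred : Fin m → Bool) (a : 𝒜) : ℝ :=
  ((univ.filter fun i => A i = a ∧ Ys i = false ∧ pred i = true).card : ℝ) /
    ((univ.filter fun i => A i = a ∧ Ys i = false).card : ℝ)

/-- Empirical true positive rate of `pred` on group `a`. -/
noncomputable def TPrate {m : ℕ} {𝒜 : Type*} [Fintype 𝒜] [DecidableEq 𝒜]
    (A : Fin m → 𝒜) (Ys pred : Fin m → Bool) (a : 𝒜) : ℝ :=
  ((univ.filter fun i => A i = a ∧ Ys i = true ∧ pred i = true).card : ℝ) /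
    ((univ.filter fun i => A i = a ∧ Ys i = true).card : ℝ)

/-- Empirical fraction of individuals with `A = a` and `Y = y`. -/
noncomputable def groupFrac {m : ℕ} {𝒜 : Type*} [Fintype 𝒜] [DecidableEq 𝒜]
    (A : Fin m → 𝒜) (Ys : Fin m → Bool) (a : 𝒜) (y : Bool) : ℝ :=
  ((univ.filter fun i => A i = a ∧ Ys i = y).card : ℝ) / m

/-- the fairness-violation vector `r̂(h)` (signed FP/TP rate
differences between each group `a ≠ 0` and group `0`, minus `γ`) has ℓ1
sensitivity at most `2|𝒜| / (min_{a,y} q̂_{a,y}·m − 1)` with respect to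
changing a single individual's protected attribute. -/

lemma ratio_bound (n d e qm : ℝ) (hn0 : 0 ≤ n) (hnd : n ≤ d) (hd : qm ≤ d)
    (hqm : 1 < qm) (he : e = n ∨ e = n - 1) :
    |n / d - e / (d - 1)| ≤ 1 / (qm - 1) := by
  have hd1 : 1 < d := lt_of_lt_of_le hqm hd
  have hdpos : 0 < d := by linarith
  have hd1pos : 0 < d - 1 := by linarith
  have hq1 : 0 < qm - 1 := by linarith
  have hrw : n / d - e / (d - 1) = (n * (d - 1) - e * d) / (d * (d - 1)) := by
    field_simp
  have habs : |n * (d - 1) - e * d| ≤ d := by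
    rcases he with h | h
    · rw [h, show n * (d - 1) - n * d = -n by ring, abs_neg, abs_of_nonneg hn0]; linarith
    · rw [h, show n * (d - 1) - (n - 1) * d = d - n by ring,
        abs_of_nonneg (by linarith)]
      linarith
  calc |n / d - e / (d - 1)| = |n * (d - 1) - e * d| / (d * (d - 1)) := by
        rw [hrw, abs_div]; congr 1; exact abs_of_pos (by positivity)
    _ ≤ d / (d * (d - 1)) := by gcongr
    _ = 1 / (d - 1) := by field_simp
    _ ≤ 1 / (qm - 1) := by
        apply one_div_le_one_div_of_le hq1; linarith


lemma ratio_remove {α : Type*} [DecidableEq α] (j : α) (S T : Finset α)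
    (hTS : T ⊆ S) (hj : j ∈ S) (qm : ℝ) (hq : qm ≤ (S.card : ℝ)) (hqm : 1 < qm) :
    |((T.card : ℝ) / S.card - ((T.erase j).card : ℝ) / ((S.erase j).card : ℝ))| ≤
      1 / (qm - 1) := by
  have hS1 : 1 ≤ S.card := Finset.card_pos.mpr ⟨j, hj⟩
  have hSd : ((S.erase j).card : ℝ) = (S.card : ℝ) - 1 := by
    rw [Finset.card_erase_of_mem hj]; push_cast [hS1]; ring
  rw [hSd]
  apply ratio_bound _ _ _ qm (by positivity) (by exact_mod_cast Finset.card_le_card hTS)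
    hq hqm
  by_cases hjT : j ∈ T
  · right
    have hT1 : 1 ≤ T.card := Finset.card_pos.mpr ⟨j, hjT⟩
    rw [Finset.card_erase_of_mem hjT]; push_cast [hT1]; ring
  · left; rw [Finset.erase_eq_of_notMem hjT]

lemma card_ratio_bound {α : Type*} [DecidableEq α] (j : α) (S S' T T' : Finset α)
    (hS : S.erase j = S'.erase j) (hT : T.erase j = T'.erase j)
    (hTS : T ⊆ S) (hTS' : T' ⊆ S')
    (hmem : j ∈ S → j ∈ S' → (j ∈ T ↔ j ∈ T'))
    (qm : ℝ) (hq : qm ≤ (S.card : ℝ)) (hq' : qm ≤ (S'.card : ℝ)) (hqm : 1 < qm) :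
    |(T.card : ℝ) / S.card - (T'.card : ℝ) / S'.card| ≤ 1 / (qm - 1) := by
  by_cases hjS : j ∈ S <;> by_cases hjS' : j ∈ S'
  · -- both: S = S', T = T'
    have hSS : S = S' := by
      rw [← Finset.insert_erase hjS, ← Finset.insert_erase hjS', hS]
    have hTT : T = T' := by
      by_cases hjT : j ∈ T
      · have hjT' : j ∈ T' := (hmem hjS hjS').mp hjT
        rw [← Finset.insert_erase hjT, ← Finset.insert_erase hjT', hT]
      · have hjT' : j ∉ T' := fun h => hjT ((hmem hjS hjS').mpr h)
        rw [← Finset.erase_eq_of_notMem hjT, ← Finset.erase_eq_of_notMem hjT', hT]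
    rw [hSS, hTT, sub_self, abs_zero]
    have : (0:ℝ) < qm - 1 := by linarith
    positivity
  · -- j ∈ S, j ∉ S' : S' = S.erase j, T' = T.erase j
    have hjT' : j ∉ T' := fun h => hjS' (hTS' h)
    have hS' : S' = S.erase j := by rw [hS, Finset.erase_eq_of_notMem hjS']
    have hT' : T' = T.erase j := by rw [hT, Finset.erase_eq_of_notMem hjT']
    rw [hS', hT']
    exact ratio_remove j S T hTS hjS qm hq hqm
  · -- symmetric
    have hjT : j ∉ T := fun h => hjS (hTS h)
    have hS2 : S = S'.erase j := by rw [← hS, Finset.erase_eq_of_notMem hjS]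
    have hT2 : T = T'.erase j := by rw [← hT, Finset.erase_eq_of_notMem hjT]
    rw [hS2, hT2, abs_sub_comm]
    exact ratio_remove j S' T' hTS' hjS' qm hq' hqm
  · -- neither
    have hjT : j ∉ T := fun h => hjS (hTS h)
    have hjT' : j ∉ T' := fun h => hjS' (hTS' h)
    have hSS : S = S' := by
      rw [← Finset.erase_eq_of_notMem hjS, ← Finset.erase_eq_of_notMem hjS', hS]
    have hTT : T = T' := by
      rw [← Finset.erase_eq_of_notMem hjT, ← Finset.erase_eq_of_notMem hjT', hT]
    rw [hSS, hTT, sub_self, abs_zero]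
    have : (0:ℝ) < qm - 1 := by linarith
    positivity

theorem fairness_vector_sensitivity {m : ℕ} {𝒜 : Type*} [Fintype 𝒜] [DecidableEq 𝒜]
    (A A' : Fin m → 𝒜) (Ys pred : Fin m → Bool) (a0 : 𝒜) (γ : ℝ) (j : Fin m)
    (hneighbor : ∀ i : Fin m, i ≠ j → A i = A' i)
    (qmin : ℝ)
    (hqmin : ∀ a y, qmin ≤ groupFrac A Ys a y)
    (hqmin' : ∀ a y, qmin ≤ groupFrac A' Ys a y)
    (hm : 1 < qmin * m) :
    ∑ a ∈ univ.erase a0,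
      (|(FPrate A Ys pred a - FPrate A Ys pred a0 - γ) -
          (FPrate A' Ys pred a - FPrate A' Ys pred a0 - γ)| +
       |(FPrate A Ys pred a0 - FPrate A Ys pred a - γ) -
          (FPrate A' Ys pred a0 - FPrate A' Ys pred a - γ)| +
       |(TPrate A Ys pred a - TPrate A Ys pred a0 - γ) -
          (TPrate A' Ys pred a - TPrate A' Ys pred a0 - γ)| +
       |(TPrate A Ys pred a0 - TPrate A Ys pred a - γ) -
          (TPrate A' Ys pred a0 - TPrate A' Ys pred a - γ)|)
      ≤ 2 * (Fintype.card 𝒜) / (qmin * m - 1) := by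
  classical
  have hB1 : (0:ℝ) < qmin * m - 1 := by linarith
  have hBpos : (0:ℝ) ≤ 1 / (qmin * m - 1) := by positivity
  have hmpos : (0:ℝ) < m := by
    rcases (Nat.cast_nonneg (α := ℝ) m).eq_or_lt with h | h
    · exfalso; rw [← h] at hm; simp at hm; linarith
    · exact h
  have hden : ∀ a y, qmin * m ≤ ((univ.filter fun i => A i = a ∧ Ys i = y).card : ℝ) := by
    intro a y
    have h := hqmin a y
    rw [groupFrac, le_div_iff₀ hmpos] at h
    exact h
  have hden' : ∀ a y, qmin * m ≤ ((univ.filter fun i => A' i = a ∧ Ys i = y).card : ℝ) := by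
    intro a y
    have h := hqmin' a y
    rw [groupFrac, le_div_iff₀ hmpos] at h
    exact h
  -- key per-coordinate bound
  have hkey : ∀ (a : 𝒜) (y : Bool),
      |((univ.filter fun i => A i = a ∧ Ys i = y ∧ pred i = true).card : ℝ) /
        ((univ.filter fun i => A i = a ∧ Ys i = y).card : ℝ) -
       ((univ.filter fun i => A' i = a ∧ Ys i = y ∧ pred i = true).card : ℝ) /
        ((univ.filter fun i => A' i = a ∧ Ys i = y).card : ℝ)| ≤ 1 / (qmin * m - 1) := by
    intro a y
    apply card_ratio_bound j
    · ext i
      simp only [Finset.mem_erase, Finset.mem_filter, Finset.mem_univ, true_and]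
      rcases eq_or_ne i j with rfl | hij
      · simp
      · rw [hneighbor i hij]
    · ext i
      simp only [Finset.mem_erase, Finset.mem_filter, Finset.mem_univ, true_and]
      rcases eq_or_ne i j with rfl | hij
      · simp
      · rw [hneighbor i hij]
    · intro i hi
      simp only [Finset.mem_filter, Finset.mem_univ, true_and] at hi ⊢
      tauto
    · intro i hi
      simp only [Finset.mem_filter, Finset.mem_univ, true_and] at hi ⊢
      tauto
    · intro h1 h2
      simp only [Finset.mem_filter, Finset.mem_univ, true_and] at h1 h2 ⊢
      tauto
    · exact hden a y
    · exact hden' a y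
    · exact hm
  have hFP : ∀ a, |FPrate A Ys pred a - FPrate A' Ys pred a| ≤ 1 / (qmin * m - 1) := by
    intro a; rw [FPrate, FPrate]; exact hkey a false
  have hTP : ∀ a, |TPrate A Ys pred a - TPrate A' Ys pred a| ≤ 1 / (qmin * m - 1) := by
    intro a; rw [TPrate, TPrate]; exact hkey a true
  -- equality of filters when j is in neither group
  have hSeq : ∀ (a : 𝒜) (y : Bool), ¬(A j = a ∧ Ys j = y) → ¬(A' j = a ∧ Ys j = y) →
      (univ.filter fun i => A i = a ∧ Ys i = y) =
        (univ.filter fun i => A' i = a ∧ Ys i = y) := by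
    intro a y h1 h2
    ext i
    simp only [Finset.mem_filter, Finset.mem_univ, true_and]
    rcases eq_or_ne i j with rfl | hij
    · tauto
    · rw [hneighbor i hij]
  have hTeq : ∀ (a : 𝒜) (y : Bool), ¬(A j = a ∧ Ys j = y) → ¬(A' j = a ∧ Ys j = y) →
      (univ.filter fun i => A i = a ∧ Ys i = y ∧ pred i = true) =
        (univ.filter fun i => A' i = a ∧ Ys i = y ∧ pred i = true) := by
    intro a y h1 h2
    ext i
    simp only [Finset.mem_filter, Finset.mem_univ, true_and]
    rcases eq_or_ne i j with rfl | hij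
    · tauto
    · rw [hneighbor i hij]
  have hFPeq : ∀ a, ¬(A j = a ∧ Ys j = false) → ¬(A' j = a ∧ Ys j = false) →
      FPrate A Ys pred a = FPrate A' Ys pred a := by
    intro a h1 h2
    rw [FPrate, FPrate, hSeq a false h1 h2, hTeq a false h1 h2]
  have hTPeq : ∀ a, ¬(A j = a ∧ Ys j = true) → ¬(A' j = a ∧ Ys j = true) →
      TPrate A Ys pred a = TPrate A' Ys pred a := by
    intro a h1 h2
    rw [TPrate, TPrate, hSeq a true h1 h2, hTeq a true h1 h2]
  -- combined per-group bound
  have hD : ∀ a, |FPrate A Ys pred a - FPrate A' Ys pred a| +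
      |TPrate A Ys pred a - TPrate A' Ys pred a| ≤ 1 / (qmin * m - 1) := by
    intro a
    cases hYj : Ys j with
    | false =>
        have h2 : TPrate A Ys pred a = TPrate A' Ys pred a :=
          hTPeq a (by simp [hYj]) (by simp [hYj])
        rw [h2, sub_self, abs_zero, add_zero]
        exact hFP a
    | true =>
        have h2 : FPrate A Ys pred a = FPrate A' Ys pred a :=
          hFPeq a (by simp [hYj]) (by simp [hYj])
        rw [h2, sub_self, abs_zero, zero_add]
        exact hTP a
  have hDzero : ∀ a, a ≠ A j → a ≠ A' j → |FPrate A Ys pred a - FPrate A' Ys pred a| +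
      |TPrate A Ys pred a - TPrate A' Ys pred a| = 0 := by
    intro a h1 h2
    rw [hFPeq a (fun h => h1 h.1.symm) (fun h => h2 h.1.symm),
        hTPeq a (fun h => h1 h.1.symm) (fun h => h2 h.1.symm)]
    simp
  have hDnn : ∀ a, (0:ℝ) ≤ |FPrate A Ys pred a - FPrate A' Ys pred a| +
      |TPrate A Ys pred a - TPrate A' Ys pred a| := by
    intro a; positivity
  -- triangle inequality for each coordinate
  have tri : ∀ x x' y y' : ℝ, |(x - y - γ) - (x' - y' - γ)| ≤ |x - x'| + |y - y'| := by
    intro x x' y y'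
    rw [show (x - y - γ) - (x' - y' - γ) = (x - x') - (y - y') by ring]
    calc |(x - x') - (y - y')| ≤ |x - x'| + |-(y - y')| := by
          rw [sub_eq_add_neg]; exact abs_add_le _ _
      _ = |x - x'| + |y - y'| := by rw [abs_neg]
  have hpoint : ∀ a ∈ univ.erase a0,
      (|(FPrate A Ys pred a - FPrate A Ys pred a0 - γ) -
          (FPrate A' Ys pred a - FPrate A' Ys pred a0 - γ)| +
       |(FPrate A Ys pred a0 - FPrate A Ys pred a - γ) -
          (FPrate A' Ys pred a0 - FPrate A' Ys pred a - γ)| +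
       |(TPrate A Ys pred a - TPrate A Ys pred a0 - γ) -
          (TPrate A' Ys pred a - TPrate A' Ys pred a0 - γ)| +
       |(TPrate A Ys pred a0 - TPrate A Ys pred a - γ) -
          (TPrate A' Ys pred a0 - TPrate A' Ys pred a - γ)|) ≤
      2 * (|FPrate A Ys pred a - FPrate A' Ys pred a| +
           |TPrate A Ys pred a - TPrate A' Ys pred a|) +
      2 * (|FPrate A Ys pred a0 - FPrate A' Ys pred a0| +
           |TPrate A Ys pred a0 - TPrate A' Ys pred a0|) := by
    intro a _
    have t1 := tri (FPrate A Ys pred a) (FPrate A' Ys pred a)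
      (FPrate A Ys pred a0) (FPrate A' Ys pred a0)
    have t2 := tri (FPrate A Ys pred a0) (FPrate A' Ys pred a0)
      (FPrate A Ys pred a) (FPrate A' Ys pred a)
    have t3 := tri (TPrate A Ys pred a) (TPrate A' Ys pred a)
      (TPrate A Ys pred a0) (TPrate A' Ys pred a0)
    have t4 := tri (TPrate A Ys pred a0) (TPrate A' Ys pred a0)
      (TPrate A Ys pred a) (TPrate A' Ys pred a)
    linarith
  rcases (univ.erase a0).eq_empty_or_nonempty with hemp | ⟨b, hb⟩
  · rw [hemp, Finset.sum_empty]
    positivity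
  · have hba0 : b ≠ a0 := (Finset.mem_erase.mp hb).1
    have hcard2 : 1 < Fintype.card 𝒜 := Fintype.one_lt_card_iff_nontrivial.mpr ⟨⟨b, a0, hba0⟩⟩
    have hcard1 : 1 ≤ Fintype.card 𝒜 := le_of_lt hcard2
    have hK : ((univ.erase a0).card : ℝ) = (Fintype.card 𝒜 : ℝ) - 1 := by
      rw [Finset.card_erase_of_mem (Finset.mem_univ a0), Finset.card_univ,
        Nat.cast_sub hcard1, Nat.cast_one]
    -- abbreviate
    set Δ : 𝒜 → ℝ := fun a => |FPrate A Ys pred a - FPrate A' Ys pred a| +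
      |TPrate A Ys pred a - TPrate A' Ys pred a| with hΔdef
    have step1 : ∑ a ∈ univ.erase a0,
        (|(FPrate A Ys pred a - FPrate A Ys pred a0 - γ) -
            (FPrate A' Ys pred a - FPrate A' Ys pred a0 - γ)| +
         |(FPrate A Ys pred a0 - FPrate A Ys pred a - γ) -
            (FPrate A' Ys pred a0 - FPrate A' Ys pred a - γ)| +
         |(TPrate A Ys pred a - TPrate A Ys pred a0 - γ) -
            (TPrate A' Ys pred a - TPrate A' Ys pred a0 - γ)| +
         |(TPrate A Ys pred a0 - TPrate A Ys pred a - γ) -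
            (TPrate A' Ys pred a0 - TPrate A' Ys pred a - γ)|) ≤
        ∑ a ∈ univ.erase a0, (2 * Δ a + 2 * Δ a0) :=
      Finset.sum_le_sum hpoint
    have step2 : ∑ a ∈ univ.erase a0, (2 * Δ a + 2 * Δ a0) =
        2 * (∑ a ∈ univ.erase a0, Δ a) + ((univ.erase a0).card : ℝ) * (2 * Δ a0) := by
      rw [Finset.sum_add_distrib, Finset.sum_const, Finset.mul_sum, nsmul_eq_mul]
    set I : Finset 𝒜 := (univ.erase a0) ∩ {A j, A' j} with hIdef
    have hsum_eq : ∑ a ∈ univ.erase a0, Δ a = ∑ a ∈ I, Δ a := by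
      refine (Finset.sum_subset Finset.inter_subset_left ?_).symm
      intro x hx hnx
      have hxp : x ∉ ({A j, A' j} : Finset 𝒜) := fun h => hnx (Finset.mem_inter.mpr ⟨hx, h⟩)
      simp only [Finset.mem_insert, Finset.mem_singleton, not_or] at hxp
      exact hDzero x hxp.1 hxp.2
    have hsumI : ∑ a ∈ I, Δ a ≤ (I.card : ℝ) * (1 / (qmin * m - 1)) := by
      have := Finset.sum_le_card_nsmul I Δ (1 / (qmin * m - 1)) (fun x _ => hD x)
      simpa [nsmul_eq_mul] using this
    have hpair : ({A j, A' j} : Finset 𝒜).card ≤ 2 := by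
      apply le_trans (Finset.card_insert_le _ _)
      simp
    by_cases ha0 : a0 = A j ∨ a0 = A' j
    · -- a0 is one of the changed groups
      have hIcard : I.card ≤ 1 := by
        have hsub : I ⊆ ({A j, A' j} : Finset 𝒜).erase a0 := by
          intro x hx
          rcases Finset.mem_inter.mp hx with ⟨hx1, hx2⟩
          exact Finset.mem_erase.mpr ⟨(Finset.mem_erase.mp hx1).1, hx2⟩
        have ha0mem : a0 ∈ ({A j, A' j} : Finset 𝒜) := by
          rcases ha0 with h | h <;> simp [h]
        calc I.card ≤ (({A j, A' j} : Finset 𝒜).erase a0).card := Finset.card_le_card hsub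
          _ = ({A j, A' j} : Finset 𝒜).card - 1 := Finset.card_erase_of_mem ha0mem
          _ ≤ 1 := by omega
      have hIc : (I.card : ℝ) ≤ 1 := by exact_mod_cast hIcard
      have h1 : ∑ a ∈ I, Δ a ≤ 1 / (qmin * m - 1) := by
        calc ∑ a ∈ I, Δ a ≤ (I.card : ℝ) * (1 / (qmin * m - 1)) := hsumI
          _ ≤ 1 * (1 / (qmin * m - 1)) := by
              apply mul_le_mul_of_nonneg_right hIc hBpos
          _ = 1 / (qmin * m - 1) := one_mul _
      have h2 : Δ a0 ≤ 1 / (qmin * m - 1) := hD a0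
      have h3 : (0:ℝ) ≤ Δ a0 := hDnn a0
      have hKnn : (0:ℝ) ≤ ((univ.erase a0).card : ℝ) := Nat.cast_nonneg _
      have h4 : ((univ.erase a0).card : ℝ) * (2 * Δ a0) ≤
          ((Fintype.card 𝒜 : ℝ) - 1) * (2 * (1 / (qmin * m - 1))) := by
        rw [hK]
        apply mul_le_mul_of_nonneg_left (by linarith) (by rw [← hK]; exact hKnn)
      calc _ ≤ 2 * (∑ a ∈ univ.erase a0, Δ a) + ((univ.erase a0).card : ℝ) * (2 * Δ a0) :=
            le_trans step1 (le_of_eq step2)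
        _ ≤ 2 * (1 / (qmin * m - 1)) +
            ((Fintype.card 𝒜 : ℝ) - 1) * (2 * (1 / (qmin * m - 1))) := by
            rw [hsum_eq]; linarith
        _ = 2 * (Fintype.card 𝒜 : ℝ) * (1 / (qmin * m - 1)) := by ring
        _ = 2 * (Fintype.card 𝒜 : ℝ) / (qmin * m - 1) := by rw [mul_one_div]
    · -- a0 unchanged
      push_neg at ha0
      have hΔa0 : Δ a0 = 0 := hDzero a0 ha0.1 ha0.2
      have hIcard : I.card ≤ 2 := le_trans (Finset.card_le_card Finset.inter_subset_right) hpair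
      have hIc : (I.card : ℝ) ≤ 2 := by exact_mod_cast hIcard
      have h1 : ∑ a ∈ I, Δ a ≤ 2 * (1 / (qmin * m - 1)) := by
        calc ∑ a ∈ I, Δ a ≤ (I.card : ℝ) * (1 / (qmin * m - 1)) := hsumI
          _ ≤ 2 * (1 / (qmin * m - 1)) := mul_le_mul_of_nonneg_right hIc hBpos
      have hc2 : (2:ℝ) ≤ (Fintype.card 𝒜 : ℝ) := by exact_mod_cast hcard2
      calc _ ≤ 2 * (∑ a ∈ univ.erase a0, Δ a) + ((univ.erase a0).card : ℝ) * (2 * Δ a0) :=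
            le_trans step1 (le_of_eq step2)
        _ ≤ 2 * (2 * (1 / (qmin * m - 1))) + 0 := by
            rw [hsum_eq, hΔa0, mul_zero, mul_zero, add_zero]
            linarith [h1]
        _ ≤ 2 * (Fintype.card 𝒜 : ℝ) * (1 / (qmin * m - 1)) := by nlinarith
        _ = 2 * (Fintype.card 𝒜 : ℝ) / (qmin * m - 1) := by rw [mul_one_div]
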